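/- Let P be a finite poset and c : P → P a closure operator (increasing, order-preserving, idempotent), and let P̄ denote the subposet of closed elements. Suppose f : P → ℂ and g : P̄ → ℂ are functions such that for every closed element x we have ∑_{y ∈ P, y ≤ x} f(y) = ∑_{y ∈ P̄, y ≤ x} g(y). Then for every closed element y, g(y) = ∑_{z ∈ P, c(z) = y} f(z). -/

import Mathlib

/-- Closure operator summation lemma (Lemma 2.8). -/
theorem closure_operator_sum
    (P : Type*) [Fintype P] [PartialOrder P] [DecidableEq P]
    [DecidableRel ((· ≤ ·) : P → P → Prop)]
    (c : P → P)
    (hincr : ∀ x, x ≤ c x)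
    (hmono : ∀ x y, x ≤ y → c x ≤ c y)
    (hidem : ∀ x, c (c x) = c x)
    (f : P → ℂ) (g : {x : P // c x = x} → ℂ)
    (hFg : ∀ x : {x : P // c x = x},
      ∑ y ∈ Finset.univ.filter (fun y => y ≤ x.1), f y
        = ∑ y ∈ Finset.univ.filter (fun y : {x : P // c x = x} => y.1 ≤ x.1), g y) :
    ∀ y : {x : P // c x = x},
      g y = ∑ z ∈ Finset.univ.filter (fun z => c z = y.1), f z := by
  classical
  let Q := {x : P // c x = x}
  set h : Q → ℂ := fun q => ∑ z ∈ Finset.univ.filter (fun z => c z = q.1), f z with hh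
  -- key: partial sums of h agree with partial sums of f
  have keyh : ∀ x : Q,
      ∑ q ∈ Finset.univ.filter (fun q : Q => q.1 ≤ x.1), h q
        = ∑ y ∈ Finset.univ.filter (fun y => y ≤ x.1), f y := by
    intro x
    have := Finset.sum_fiberwise_eq_sum_filter (Finset.univ : Finset P)
      (Finset.univ.filter (fun q : Q => q.1 ≤ x.1))
      (fun z => (⟨c z, hidem z⟩ : Q)) f
    rw [hh]
    have h1 : ∀ q : Q,
        Finset.univ.filter (fun z => c z = q.1)
          = Finset.univ.filter (fun z => (⟨c z, hidem z⟩ : Q) = q) := by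
      intro q; ext z; simp [Subtype.ext_iff]
    calc ∑ q ∈ Finset.univ.filter (fun q : Q => q.1 ≤ x.1),
            ∑ z ∈ Finset.univ.filter (fun z => c z = q.1), f z
        = ∑ q ∈ Finset.univ.filter (fun q : Q => q.1 ≤ x.1),
            ∑ z ∈ Finset.univ.filter (fun z => (⟨c z, hidem z⟩ : Q) = q), f z := by
          refine Finset.sum_congr rfl ?_; intro q _; rw [h1 q]
      _ = ∑ z ∈ Finset.univ.filter
            (fun z => (⟨c z, hidem z⟩ : Q) ∈ Finset.univ.filter (fun q : Q => q.1 ≤ x.1)), f z :=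
          this
      _ = ∑ y ∈ Finset.univ.filter (fun y => y ≤ x.1), f y := by
          refine Finset.sum_congr ?_ (fun _ _ => rfl)
          ext z
          simp only [Finset.mem_filter, Finset.mem_univ, true_and]
          constructor
          · intro hz; exact le_trans (hincr z) hz
          · intro hz; exact le_trans (hmono z x.1 hz) (le_of_eq x.2)
  have key : ∀ x : Q, ∑ q ∈ Finset.univ.filter (fun q : Q => q.1 ≤ x.1), (g q - h q) = 0 := by
    intro x
    rw [Finset.sum_sub_distrib, keyh x, ← hFg x, sub_self]
  have main : ∀ x : Q, g x - h x = 0 := by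
    intro x
    induction x using WellFoundedLT.induction with
    | _ x ih =>
      have hsplit : Finset.univ.filter (fun q : Q => q.1 ≤ x.1)
          = insert x (Finset.univ.filter (fun q : Q => q < x)) := by
        ext q
        simp only [Finset.mem_filter, Finset.mem_univ, true_and, Finset.mem_insert]
        have : q.1 ≤ x.1 ↔ q ≤ x := Iff.rfl
        rw [this, le_iff_lt_or_eq, or_comm]
      have hx : x ∉ Finset.univ.filter (fun q : Q => q < x) := by simp; exact lt_irrefl x
      have := key x
      rw [hsplit, Finset.sum_insert hx] at this
      have hz : ∑ q ∈ Finset.univ.filter (fun q : Q => q < x), (g q - h q) = 0 := by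
        refine Finset.sum_eq_zero ?_
        intro q hq
        simp only [Finset.mem_filter] at hq
        exact ih q hq.2
      rw [hz, add_zero] at this
      exact this
  intro y
  exact sub_eq_zero.mp (main y)
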